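/- On ℝ⁶ with coordinates (x, y, u, p, q, λ), define the vector fields D_x = ∂_x + p∂_u + λ∂_p + (λ²/2)∂_q and D_y = ∂_y + q∂_u + (λ²/2)∂_p + (λ³/3)∂_q. Then [D_y, D_x] = 0, and the field ξ = D_y − λ·D_x satisfies [∂_λ, ξ] = −D_x. Consequently ξ is a Cauchy characteristic of the rank-3 distribution spanned by D_x, D_y, ∂_λ. -/

import Mathlib

/-- Lie bracket of vector fields on ℝⁿ. -/
noncomputable def lie {n : ℕ} (X Y : (Fin n → ℝ) → (Fin n → ℝ)) :
    (Fin n → ℝ) → (Fin n → ℝ) :=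
  fun p => fderiv ℝ Y p (X p) - fderiv ℝ X p (Y p)

/-- Coordinates on ℝ⁶: (x, y, u, p, q, λ) = (P 0, ..., P 5). -/
noncomputable def Dx : (Fin 6 → ℝ) → (Fin 6 → ℝ) :=
  fun P => ![1, 0, P 3, P 5, (P 5) ^ 2 / 2, 0]

noncomputable def Dy : (Fin 6 → ℝ) → (Fin 6 → ℝ) :=
  fun P => ![0, 1, P 4, (P 5) ^ 2 / 2, (P 5) ^ 3 / 3, 0]

noncomputable def dLam : (Fin 6 → ℝ) → (Fin 6 → ℝ) :=
  fun _ => ![0, 0, 0, 0, 0, 1]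

noncomputable def xiC : (Fin 6 → ℝ) → (Fin 6 → ℝ) :=
  fun P => Dy P - P 5 • Dx P

open ContinuousLinearMap

lemma cons_val_five {α : Type*} (a b c d e f : α) : ![a, b, c, d, e, f] 5 = f := rfl


noncomputable def pr (i : Fin 6) : (Fin 6 → ℝ) →L[ℝ] ℝ :=
  ContinuousLinearMap.proj (R := ℝ) (φ := fun _ : Fin 6 => ℝ) i

lemma h5 (P : Fin 6 → ℝ) : HasFDerivAt (fun x : Fin 6 → ℝ => x 5) (pr 5) P :=
  hasFDerivAt_apply 5 P

noncomputable def DxD (P : Fin 6 → ℝ) : (Fin 6 → ℝ) →L[ℝ] (Fin 6 → ℝ) :=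
  ContinuousLinearMap.pi ![0, 0, pr 3, pr 5, P 5 • pr 5, 0]

noncomputable def DyD (P : Fin 6 → ℝ) : (Fin 6 → ℝ) →L[ℝ] (Fin 6 → ℝ) :=
  ContinuousLinearMap.pi ![0, 0, pr 4, P 5 • pr 5, (P 5 ^ 2) • pr 5, 0]

lemma DxD_apply (P v : Fin 6 → ℝ) : DxD P v = ![0, 0, v 3, v 5, P 5 * v 5, 0] := by
  funext i
  fin_cases i <;> simp [DxD, pr, Matrix.cons_val_succ, cons_val_five]

lemma DyD_apply (P v : Fin 6 → ℝ) :
    DyD P v = ![0, 0, v 4, P 5 * v 5, P 5 ^ 2 * v 5, 0] := by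
  funext i
  fin_cases i <;> simp [DyD, pr, Matrix.cons_val_succ, cons_val_five]

lemma hsq (P : Fin 6 → ℝ) :
    HasFDerivAt (fun x : Fin 6 → ℝ => x 5 ^ 2 / 2) (P 5 • pr 5) P := by
  have := ((h5 P).mul (h5 P)).const_mul (1/2 : ℝ)
  convert this using 1 <;> try rfl
  · funext x; simp only [Pi.mul_apply, Pi.pow_apply]; ring
  · ext v; simp [pr]; ring

lemma hcube (P : Fin 6 → ℝ) :
    HasFDerivAt (fun x : Fin 6 → ℝ => x 5 ^ 3 / 3) ((P 5 ^ 2) • pr 5) P := by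
  have := ((((h5 P).mul (h5 P)).mul (h5 P))).const_mul (1/3 : ℝ)
  convert this using 1 <;> try rfl
  · funext x; simp only [Pi.mul_apply, Pi.pow_apply]; ring
  · ext v; simp [pr]; ring

lemma hDx (P : Fin 6 → ℝ) : HasFDerivAt Dx (DxD P) P := by
  rw [hasFDerivAt_pi']
  intro i
  have e : ∀ i, (proj i).comp (DxD P) = ![(0 : (Fin 6 → ℝ) →L[ℝ] ℝ), 0, pr 3, pr 5, P 5 • pr 5, 0] i := by
    intro i; exact proj_pi _ _
  rw [e]
  fin_cases i <;> simp only [Dx, Matrix.cons_val_zero, Matrix.cons_val_one, Matrix.head_cons,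
    Matrix.cons_val_two, Matrix.tail_cons, Matrix.cons_val_three, Matrix.cons_val_four,
    Matrix.cons_val_fin_one]
  · exact hasFDerivAt_const _ _
  · exact hasFDerivAt_const _ _
  · exact hasFDerivAt_apply 3 P
  · exact hasFDerivAt_apply 5 P
  · exact hsq P
  · exact hasFDerivAt_const _ _

lemma hDy (P : Fin 6 → ℝ) : HasFDerivAt Dy (DyD P) P := by
  rw [hasFDerivAt_pi']
  intro i
  have e : ∀ i, (proj i).comp (DyD P) = ![(0 : (Fin 6 → ℝ) →L[ℝ] ℝ), 0, pr 4, P 5 • pr 5, (P 5 ^ 2) • pr 5, 0] i := by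
    intro i; exact proj_pi _ _
  rw [e]
  fin_cases i <;> simp only [Dy, Matrix.cons_val_zero, Matrix.cons_val_one, Matrix.head_cons,
    Matrix.cons_val_two, Matrix.tail_cons, Matrix.cons_val_three, Matrix.cons_val_four,
    Matrix.cons_val_fin_one]
  · exact hasFDerivAt_const _ _
  · exact hasFDerivAt_const _ _
  · exact hasFDerivAt_apply 4 P
  · exact hsq P
  · exact hcube P
  · exact hasFDerivAt_const _ _

noncomputable def XiD (P : Fin 6 → ℝ) : (Fin 6 → ℝ) →L[ℝ] (Fin 6 → ℝ) :=
  DyD P - (P 5 • DxD P + (pr 5).smulRight (Dx P))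

lemma hXi (P : Fin 6 → ℝ) : HasFDerivAt xiC (XiD P) P :=
  (hDy P).sub ((h5 P).smul (hDx P))

lemma XiD_apply (P v : Fin 6 → ℝ) :
    XiD P v = DyD P v - (P 5 • DxD P v + v 5 • Dx P) := by
  simp [XiD, pr]

lemma hdL (P : Fin 6 → ℝ) : HasFDerivAt dLam (0 : (Fin 6 → ℝ) →L[ℝ] (Fin 6 → ℝ)) P :=
  hasFDerivAt_const _ _

lemma xiC_val (P : Fin 6 → ℝ) :
    xiC P = ![-(P 5), 1, P 4 - P 5 * P 3, -(P 5 ^ 2 / 2), -(P 5 ^ 3 / 6), 0] := by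
  funext i
  fin_cases i <;> simp [xiC, Dx, Dy, Matrix.cons_val_succ, cons_val_five] <;> ring

/-- On ℝ⁶(x,y,u,p,q,λ) with D_x = ∂_x + p∂_u + λ∂_p + (λ²/2)∂_q and
D_y = ∂_y + q∂_u + (λ²/2)∂_p + (λ³/3)∂_q one has [D_y, D_x] = 0 and
[∂_λ, ξ] = −D_x for ξ = D_y − λ·D_x; consequently ξ is a Cauchy characteristic
of the rank-3 distribution spanned by D_x, D_y, ∂_λ. -/
theorem cauchy_characteristic_cartan_model :
    (∀ P, lie Dy Dx P = 0) ∧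
    (∀ P, lie dLam xiC P = -(Dx P)) ∧
    (∀ P, ∀ Z ∈ ({Dx, Dy, dLam} : Set ((Fin 6 → ℝ) → (Fin 6 → ℝ))),
      lie xiC Z P ∈ Submodule.span ℝ {Dx P, Dy P, dLam P}) := by
  have key : ∀ P,
      lie Dy Dx P = 0 ∧ lie dLam xiC P = -(Dx P) ∧
      lie xiC Dx P = 0 ∧ lie xiC Dy P = 0 ∧ lie xiC dLam P = Dx P := by
    intro P
    have e1 : fderiv ℝ Dx P = DxD P := (hDx P).fderiv
    have e2 : fderiv ℝ Dy P = DyD P := (hDy P).fderiv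
    have e3 : fderiv ℝ xiC P = XiD P := (hXi P).fderiv
    have e4 : fderiv ℝ dLam P = (0 : (Fin 6 → ℝ) →L[ℝ] (Fin 6 → ℝ)) := (hdL P).fderiv
    refine ⟨?_, ?_, ?_, ?_, ?_⟩ <;>
      · simp only [lie, e1, e2, e3, e4, XiD_apply, DxD_apply, DyD_apply,
          ContinuousLinearMap.zero_apply, xiC_val]
        funext i
        fin_cases i <;>
          simp [Dx, Dy, dLam, Matrix.cons_val_succ, cons_val_five] <;> first | rfl | ring
  refine ⟨fun P => (key P).1, fun P => (key P).2.1, fun P Z hZ => ?_⟩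
  rcases hZ with h | h | h <;> subst h
  · rw [(key P).2.2.1]; exact zero_mem _
  · rw [(key P).2.2.2.1]; exact zero_mem _
  · rw [(key P).2.2.2.2]
    exact Submodule.subset_span (by simp)
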